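/- arXiv:2412.10213 — 7 statements merged into one kernel-verified Lean document; each statement's English description precedes it below -/
import Mathlib

section
/- With rows of the design matrix X indexed by pairs (i,j) ∈ {1,…,N}×{1,…,K} and columns indexed by {1,…,K} ⊔ ({1,…,K}×{1,…,p}), where X[(i,j), j'] = x_{ij}·δ_{jj'} and X[(i,j), (j',k)] = Z_{ik}·δ_{jj'}, and with V the NK×NK matrix whose ((i,j),(i',j')) entry is δ_{ii'}·(τ² + δ_{jj'} σ_j²): if V, Xᵀ V⁻¹ X, and the matrix P(β̂) are all invertible, then the upper-left K×K block of (Xᵀ V⁻¹ X)⁻¹ equals P(β̂)⁻¹; that is, P(β̂) is the precision matrix of the generalized least squares treatment effect estimates β̂ = (β̂_1,…,β̂_K). -/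
open Matrix Finset
open Kronecker

/-- With design matrix `X` (rows indexed by subject–experiment pairs, columns
by treatment effects `Fin K` and covariate effects `Fin K × Fin p`) and response covariance
matrix `V`, if `V`, `Xᵀ V⁻¹ X` and `P(β̂)` are invertible, then the upper-left K×K block
of `(Xᵀ V⁻¹ X)⁻¹` equals `P(β̂)⁻¹`; i.e. `P(β̂)` is the precision matrix of the GLS
treatment effect estimates. -/
theorem statement_0 (N K p : ℕ) (hN : 1 ≤ N) (hK : 1 ≤ K)
    (τsq : ℝ) (hτ : 0 ≤ τsq) (σsq : Fin K → ℝ) (hσ : ∀ j, 0 < σsq j)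
    (Z : Matrix (Fin N) (Fin p) ℝ) (hZ : IsUnit (Zᵀ * Z).det)
    (x : Fin K → Fin N → ℝ) (hx : ∀ j i, x j i = 1 ∨ x j i = -1)
    (c : ℝ) (hc : c = 1 + τsq * ∑ ℓ, (σsq ℓ)⁻¹)
    (Q : Fin K → ℝ) (hQ : ∀ j, Q j = (σsq j)⁻¹ * (c - τsq * (σsq j)⁻¹))
    (R : Fin K → Fin K → ℝ) (hR : ∀ j j', R j j' = -(τsq * (σsq j)⁻¹ * (σsq j')⁻¹))
    (P : Matrix (Fin K) (Fin K) ℝ)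
    (hP : ∀ j j', P j j' = (1 / c) * (if j = j' then Q j else R j j') *
      (x j ⬝ᵥ ((1 - Z * (Zᵀ * Z)⁻¹ * Zᵀ) *ᵥ x j')))
    (X : Matrix (Fin N × Fin K) (Fin K ⊕ Fin K × Fin p) ℝ)
    (hX₁ : ∀ i j j', X (i, j) (Sum.inl j') = if j = j' then x j i else 0)
    (hX₂ : ∀ i j j' k, X (i, j) (Sum.inr (j', k)) = if j = j' then Z i k else 0)
    (V : Matrix (Fin N × Fin K) (Fin N × Fin K) ℝ)
    (hV : ∀ i j i' j', V (i, j) (i', j') =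
      if i = i' then τsq + (if j = j' then σsq j else 0) else 0)
    (hVinv : IsUnit V.det)
    (hInfo : IsUnit (Xᵀ * V⁻¹ * X).det)
    (hPinv : IsUnit P.det) :
    ∀ j j' : Fin K, (Xᵀ * V⁻¹ * X)⁻¹ (Sum.inl j) (Sum.inl j') = P⁻¹ j j' := by
  have hσne : ∀ j, σsq j ≠ 0 := fun j => (hσ j).ne'
  have hcpos : 0 < c := by
    rw [hc]
    have : 0 ≤ τsq * ∑ ℓ, (σsq ℓ)⁻¹ :=
      mul_nonneg hτ (Finset.sum_nonneg fun ℓ _ => (inv_pos.mpr (hσ ℓ)).le)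
    linarith
  have hc0 : c ≠ 0 := hcpos.ne'
  -- the within-subject covariance and its inverse
  set W : Matrix (Fin K) (Fin K) ℝ :=
    (fun j j' => τsq + if j = j' then σsq j else 0) with hWdef
  set S : Matrix (Fin K) (Fin K) ℝ :=
    (fun j j' => (if j = j' then (σsq j)⁻¹ else 0) - τsq / c * ((σsq j)⁻¹ * (σsq j')⁻¹))
    with hSdef
  have hSalt : ∀ j j', S j j' = (1 / c) * (if j = j' then Q j else R j j') := by
    intro j j'
    simp only [hSdef]
    split
    · rename_i h; subst h; rw [hQ]; field_simp; field_simp [hσne j, hc0]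
    · rw [hR]; field_simp; ring
  have hSsum : ∀ j, ∑ j', S j j' = (σsq j)⁻¹ / c := by
    intro j
    simp only [hSdef]
    rw [Finset.sum_sub_distrib, Finset.sum_ite_eq, ← Finset.mul_sum]
    have : τsq / c * ((σsq j)⁻¹ * ∑ j', (σsq j')⁻¹)
        = (σsq j)⁻¹ * ((τsq * ∑ j', (σsq j')⁻¹) / c) := by ring
    rw [if_pos (Finset.mem_univ j)]
    have hts : τsq * ∑ j', (σsq j')⁻¹ = c - 1 := by rw [hc]; ring
    have h2 : τsq / c * ∑ j', (σsq j)⁻¹ * (σsq j')⁻¹ = (σsq j)⁻¹ * (c - 1) / c := by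
      rw [← Finset.mul_sum, ← hts]; ring
    rw [h2]
    field_simp [hσne j, hc0]
    ring
  have hSW : S * W = 1 := by
    ext j j''
    rw [Matrix.mul_apply]
    have h1 : ∀ j', S j j' * W j' j'' = τsq * S j j' + (if j' = j'' then S j j' * σsq j'' else 0) := by
      intro j'
      simp only [hWdef]
      split
      · rename_i h; subst h; ring
      · ring
    rw [Finset.sum_congr rfl fun j' _ => h1 j', Finset.sum_add_distrib, ← Finset.mul_sum,
      Finset.sum_ite_eq' Finset.univ j'' (fun j' => S j j' * σsq j''), if_pos (Finset.mem_univ _),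
      hSsum]
    simp only [hSdef, Matrix.one_apply]
    split
    · rename_i h; subst h; field_simp [hσne j, hc0]; ring_nf
    · field_simp [hσne j, hσne j'', hc0]; ring
  have hWS : W * S = 1 := mul_eq_one_comm.mp hSW
  have hWinv : W⁻¹ = S := Matrix.inv_eq_left_inv hSW
  have hVk : V = (1 : Matrix (Fin N) (Fin N) ℝ) ⊗ₖ W := by
    ext ⟨i, j⟩ ⟨i', j'⟩
    rw [hV, Matrix.kroneckerMap_apply, Matrix.one_apply]
    by_cases h : i = i' <;> simp [h, hWdef]
  have hVinv' : V⁻¹ = (1 : Matrix (Fin N) (Fin N) ℝ) ⊗ₖ S := by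
    rw [hVk, Matrix.inv_kronecker, inv_one, hWinv]
  set A : Matrix (Fin K) (Fin K) ℝ := fun ℓ ℓ' => S ℓ ℓ' * (x ℓ ⬝ᵥ x ℓ') with hA
  set B : Matrix (Fin K) (Fin K × Fin p) ℝ :=
    fun ℓ m => S ℓ m.1 * (x ℓ ⬝ᵥ fun i => Z i m.2) with hB
  set C : Matrix (Fin K × Fin p) (Fin K) ℝ :=
    fun m ℓ' => S m.1 ℓ' * (x ℓ' ⬝ᵥ fun i => Z i m.2) with hCd
  set D : Matrix (Fin K × Fin p) (Fin K × Fin p) ℝ := S ⊗ₖ (Zᵀ * Z) with hD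
  have hMV : ∀ (a : Fin K ⊕ Fin K × Fin p) (i' : Fin N) (j' : Fin K),
      (Xᵀ * V⁻¹) a (i', j') = ∑ j : Fin K, X (i', j) a * S j j' := by
    intro a i' j'
    rw [Matrix.mul_apply, Fintype.sum_prod_type]
    simp only [hVinv', Matrix.transpose_apply, Matrix.kroneckerMap_apply, Matrix.one_apply,
      ite_mul, one_mul, zero_mul, mul_ite, mul_zero]
    rw [Finset.sum_comm]
    simp [Finset.sum_ite_eq']
  have hM2 : ∀ a b, (Xᵀ * V⁻¹ * X) a b
      = ∑ i' : Fin N, ∑ j' : Fin K, (∑ j : Fin K, X (i', j) a * S j j') * X (i', j') b := by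
    intro a b
    rw [Matrix.mul_apply, Fintype.sum_prod_type]
    simp only [hMV]
  have hM : Xᵀ * V⁻¹ * X = Matrix.fromBlocks A B C D := by
    ext a b
    rcases a with ℓ | ⟨ℓ, k⟩ <;> rcases b with ℓ' | ⟨ℓ', k'⟩ <;>
      simp only [hM2, hX₁, hX₂, ite_mul, mul_ite, zero_mul, mul_zero,
        Finset.sum_ite_eq', Finset.mem_univ, if_true, Matrix.fromBlocks_apply₁₁,
        Matrix.fromBlocks_apply₁₂, Matrix.fromBlocks_apply₂₁, Matrix.fromBlocks_apply₂₂,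
        hA, hB, hCd, hD, Matrix.kroneckerMap_apply, Matrix.mul_apply, Matrix.transpose_apply,
        dotProduct, Finset.mul_sum, Matrix.fromBlocks, Matrix.of_apply, Sum.elim_inl,
        Sum.elim_inr] <;>
      exact Finset.sum_congr rfl fun i _ => by ring
  have hGG : (Zᵀ * Z) * (Zᵀ * Z)⁻¹ = 1 := Matrix.mul_nonsing_inv _ hZ
  have hDright : D * (W ⊗ₖ (Zᵀ * Z)⁻¹) = 1 := by
    rw [hD, ← Matrix.mul_kronecker_mul, hSW, hGG, Matrix.one_kronecker_one]
  haveI iD : Invertible D := invertibleOfRightInverse _ _ hDright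
  have hDinv : ⅟D = W ⊗ₖ (Zᵀ * Z)⁻¹ := by
    rw [Matrix.invOf_eq_nonsing_inv, Matrix.inv_eq_right_inv hDright]
  have hBD : ∀ ℓ m k, (B * (W ⊗ₖ (Zᵀ * Z)⁻¹)) ℓ (m, k)
      = (if ℓ = m then 1 else 0) * ((x ℓ ᵥ* Z) ᵥ* (Zᵀ * Z)⁻¹) k := by
    intro ℓ m k
    rw [Matrix.mul_apply, Fintype.sum_prod_type]
    have e : ∀ m' k', B ℓ (m', k') * (W ⊗ₖ (Zᵀ * Z)⁻¹) (m', k') (m, k)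
        = (S ℓ m' * W m' m) * ((x ℓ ᵥ* Z) k' * (Zᵀ * Z)⁻¹ k' k) := by
      intro m' k'
      simp only [hB, Matrix.kroneckerMap_apply, Matrix.vecMul, dotProduct]
      ring
    simp_rw [e]
    rw [← Finset.sum_mul_sum]
    have h1 : ∑ m', S ℓ m' * W m' m = if ℓ = m then 1 else 0 := by
      rw [← Matrix.mul_apply, hSW, Matrix.one_apply]
    have h2 : ∑ k', (x ℓ ᵥ* Z) k' * (Zᵀ * Z)⁻¹ k' k = ((x ℓ ᵥ* Z) ᵥ* (Zᵀ * Z)⁻¹) k := by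
      simp [Matrix.vecMul, dotProduct]
    rw [h1, h2]
  have hBDC : ∀ ℓ ℓ', (B * (W ⊗ₖ (Zᵀ * Z)⁻¹) * C) ℓ ℓ'
      = S ℓ ℓ' * (((x ℓ ᵥ* Z) ᵥ* (Zᵀ * Z)⁻¹) ⬝ᵥ (x ℓ' ᵥ* Z)) := by
    intro ℓ ℓ'
    rw [Matrix.mul_apply, Fintype.sum_prod_type]
    simp_rw [hBD]
    simp only [ite_mul, one_mul, zero_mul]
    rw [Finset.sum_comm]
    simp only [Finset.sum_ite_eq, Finset.mem_univ, if_true]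
    have hCk : ∀ k, C (ℓ, k) ℓ' = S ℓ ℓ' * (x ℓ' ᵥ* Z) k := fun k => rfl
    simp_rw [hCk]
    simp only [dotProduct, Finset.mul_sum]
    exact Finset.sum_congr rfl fun k _ => by ring
  have hSchur : A - B * ⅟D * C = P := by
    rw [hDinv]
    ext ℓ ℓ'
    rw [Matrix.sub_apply, hBDC, hP ℓ ℓ', ← hSalt, Matrix.sub_mulVec, Matrix.one_mulVec,
      dotProduct_sub, mul_sub]
    congr 2
    conv_lhs => rw [← Matrix.mulVec_transpose Z (x ℓ'), dotProduct_mulVec]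
    conv_rhs => rw [dotProduct_mulVec, ← Matrix.vecMul_vecMul, ← Matrix.vecMul_vecMul]
  haveI iP : Invertible P := P.invertibleOfIsUnitDet hPinv
  haveI iSchur : Invertible (A - B * ⅟D * C) := by rw [hSchur]; exact iP
  haveI iFB : Invertible (Matrix.fromBlocks A B C D) := by
    rw [← hM]; exact (Xᵀ * V⁻¹ * X).invertibleOfIsUnitDet hInfo
  have hPi : ⅟(A - B * ⅟D * C) = P⁻¹ := by
    rw [Matrix.invOf_eq_nonsing_inv, hSchur]
  intro j j'
  rw [hM, ← Matrix.invOf_eq_nonsing_inv, Matrix.invOf_fromBlocks₂₂_eq,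
    Matrix.fromBlocks_apply₁₁, hPi]
end

section
/- Worst-case covariate-balanced design: suppose σ_1 = … = σ_K = σ > 0 and τ² = bσ² with b > 0, and suppose all K allocations are equal to a single vector x ∈ {−1,1}^N satisfying Zᵀ x = 0. Then the precision matrix P(β̂) equals (N/(σ²(1+bK))) times the K×K matrix with diagonal entries 1 + b(K−1) and off-diagonal entries −b; equivalently, P(β̂) = (N/σ²) I_K − (N b/(σ²(1+bK))) 𝟙_K 𝟙_Kᵀ, where 𝟙_K is the all-ones vector in ℝ^K. -/
open Matrix Finset

/-- Worst-case covariate-balanced design. If `σ_j² = σ²` for all `j`,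
`τ² = bσ²` with `b > 0`, and the same covariate-balancing allocation `x ∈ {−1,1}^N`
(with `Zᵀx = 0`) is used in all `K` experiments, then
`P(β̂) = (N/(σ²(1+bK)))·M` where `M` has diagonal entries `1+b(K−1)` and off-diagonal
entries `−b`; equivalently `P(β̂) = (N/σ²) I_K − (Nb/(σ²(1+bK))) 𝟙𝟙ᵀ`. -/
theorem statement_4 (N K p : ℕ) (hN : 1 ≤ N) (hK : 1 ≤ K)
    (σ b : ℝ) (hσ : 0 < σ) (hb : 0 < b)
    (τsq : ℝ) (hτ : τsq = b * σ ^ 2)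
    (σsq : Fin K → ℝ) (hσsq : ∀ j, σsq j = σ ^ 2)
    (Z : Matrix (Fin N) (Fin p) ℝ) (hZ : IsUnit (Zᵀ * Z).det)
    (xv : Fin N → ℝ) (hxv : ∀ i, xv i = 1 ∨ xv i = -1)
    (hbal : Zᵀ *ᵥ xv = 0)
    (x : Fin K → Fin N → ℝ) (hx : ∀ j, x j = xv)
    (c : ℝ) (hc : c = 1 + τsq * ∑ ℓ, (σsq ℓ)⁻¹)
    (Q : Fin K → ℝ) (hQ : ∀ j, Q j = (σsq j)⁻¹ * (c - τsq * (σsq j)⁻¹))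
    (R : Fin K → Fin K → ℝ) (hR : ∀ j j', R j j' = -(τsq * (σsq j)⁻¹ * (σsq j')⁻¹))
    (P : Matrix (Fin K) (Fin K) ℝ)
    (hP : ∀ j j', P j j' = (1 / c) * (if j = j' then Q j else R j j') *
      (x j ⬝ᵥ ((1 - Z * (Zᵀ * Z)⁻¹ * Zᵀ) *ᵥ x j'))) :
    (∀ j j' : Fin K, P j j' = (N / (σ ^ 2 * (1 + b * K))) *
      (if j = j' then 1 + b * ((K : ℝ) - 1) else -b)) ∧
    P = ((N : ℝ) / σ ^ 2) • (1 : Matrix (Fin K) (Fin K) ℝ) -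
      ((N : ℝ) * b / (σ ^ 2 * (1 + b * K))) • Matrix.of (fun _ _ : Fin K => (1 : ℝ)) := by

  have hProj : (1 - Z * (Zᵀ * Z)⁻¹ * Zᵀ) *ᵥ xv = xv := by
    rw [sub_mulVec, Matrix.one_mulVec, ← Matrix.mulVec_mulVec, hbal]
    simp
  have hdot : xv ⬝ᵥ xv = (N : ℝ) := by
    unfold dotProduct
    have : ∀ i, xv i * xv i = 1 := by
      intro i; rcases hxv i with h | h <;> rw [h] <;> ring
    simp [this]
  have hcsum : c = 1 + b * K := by
    rw [hc, hτ]
    have : ∑ ℓ : Fin K, (σsq ℓ)⁻¹ = K * (σ ^ 2)⁻¹ := by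
      simp [hσsq]
    rw [this]
    field_simp
  have hσ2 : (σ : ℝ) ^ 2 ≠ 0 := pow_ne_zero 2 hσ.ne'
  have hcne : (1 : ℝ) + b * K ≠ 0 := by
    have : (0:ℝ) < 1 + b * K := by positivity
    exact this.ne'
  have key : ∀ j j' : Fin K, P j j' = (N / (σ ^ 2 * (1 + b * K))) *
      (if j = j' then 1 + b * ((K : ℝ) - 1) else -b) := by
    intro j j'
    rw [hP, hx, hx, hProj, hdot]
    by_cases h : j = j'
    · simp only [h, if_pos rfl, ↓reduceIte, hQ, hσsq, hcsum, hτ]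
      field_simp
      ring
    · simp only [if_neg h, hR, hσsq, hcsum, hτ]
      field_simp
  refine ⟨key, ?_⟩
  ext j j'
  rw [key j j']
  by_cases h : j = j'
  · simp only [h, if_pos rfl, ↓reduceIte, Matrix.sub_apply, Matrix.smul_apply, Matrix.one_apply_eq,
      Matrix.of_apply, smul_eq_mul]
    field_simp
    try ring
  · simp only [if_neg h, Matrix.sub_apply, Matrix.smul_apply, Matrix.one_apply_ne h,
      Matrix.of_apply, smul_eq_mul]
    field_simp
    try ring
end

section
/- Best-case covariate-balanced design: suppose σ_1 = … = σ_K = σ > 0 and τ² = bσ² with b > 0, the allocations x_1,…,x_K ∈ {−1,1}^N satisfy Zᵀ x_j = 0 for every j and x_jᵀ x_{j'} = 0 for every j ≠ j'. Then the precision matrix satisfies P(β̂) = (N(1+b(K−1))/(σ²(1+bK))) · I_K, and consequently det(P(β̂)) = ((N/σ²)·(1+b(K−1))/(1+bK))^K. -/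
open Matrix Finset

/-- Best-case covariate-balanced design. If `σ_j² = σ²` for all `j`,
`τ² = bσ²` with `b > 0`, the allocations `x_j ∈ {−1,1}^N` balance covariates
(`Zᵀ x_j = 0`) and are mutually orthogonal (`x_jᵀ x_{j'} = 0` for `j ≠ j'`), then
`P(β̂) = (N(1+b(K−1))/(σ²(1+bK))) I_K` and
`det P(β̂) = ((N/σ²)·(1+b(K−1))/(1+bK))^K`. -/
theorem statement_7 (N K p : ℕ) (hN : 1 ≤ N) (hK : 1 ≤ K)
    (σ b : ℝ) (hσ : 0 < σ) (hb : 0 < b)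
    (τsq : ℝ) (hτ : τsq = b * σ ^ 2)
    (σsq : Fin K → ℝ) (hσsq : ∀ j, σsq j = σ ^ 2)
    (Z : Matrix (Fin N) (Fin p) ℝ) (hZ : IsUnit (Zᵀ * Z).det)
    (x : Fin K → Fin N → ℝ) (hx : ∀ j i, x j i = 1 ∨ x j i = -1)
    (hbal : ∀ j, Zᵀ *ᵥ x j = 0)
    (horth : ∀ j j' : Fin K, j ≠ j' → x j ⬝ᵥ x j' = 0)
    (c : ℝ) (hc : c = 1 + τsq * ∑ ℓ, (σsq ℓ)⁻¹)
    (Q : Fin K → ℝ) (hQ : ∀ j, Q j = (σsq j)⁻¹ * (c - τsq * (σsq j)⁻¹))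
    (R : Fin K → Fin K → ℝ) (hR : ∀ j j', R j j' = -(τsq * (σsq j)⁻¹ * (σsq j')⁻¹))
    (P : Matrix (Fin K) (Fin K) ℝ)
    (hP : ∀ j j', P j j' = (1 / c) * (if j = j' then Q j else R j j') *
      (x j ⬝ᵥ ((1 - Z * (Zᵀ * Z)⁻¹ * Zᵀ) *ᵥ x j'))) :
    P = ((N : ℝ) * (1 + b * ((K : ℝ) - 1)) / (σ ^ 2 * (1 + b * K))) •
      (1 : Matrix (Fin K) (Fin K) ℝ) ∧
    P.det = (((N : ℝ) / σ ^ 2) * ((1 + b * ((K : ℝ) - 1)) / (1 + b * K))) ^ K := by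
  have hσ2 : (σ:ℝ)^2 ≠ 0 := by positivity
  have hcval : c = 1 + b * K := by
    simp only [hc, hτ, hσsq] at *
    rw [Finset.sum_const, Finset.card_univ, Fintype.card_fin]
    field_simp
    rw [nsmul_eq_mul, one_div]
    linear_combination (b * K) * mul_inv_cancel₀ hσ2
  have hcpos : (0:ℝ) < 1 + b * K := by
    have : (0:ℝ) ≤ b * K := by positivity
    linarith
  have hcne : c ≠ 0 := by rw [hcval]; linarith
  -- projection acts as identity on the x's
  have hproj : ∀ j, (1 - Z * (Zᵀ * Z)⁻¹ * Zᵀ) *ᵥ x j = x j := by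
    intro j
    rw [Matrix.sub_mulVec, Matrix.one_mulVec, Matrix.mul_assoc,
      ← Matrix.mulVec_mulVec, ← Matrix.mulVec_mulVec, hbal j]
    simp
  have hself : ∀ j, x j ⬝ᵥ x j = (N : ℝ) := by
    intro j
    have : ∀ i, x j i * x j i = 1 := by
      intro i; rcases hx j i with h | h <;> rw [h] <;> norm_num
    simp only [dotProduct, this, Finset.sum_const, Finset.card_univ, Fintype.card_fin,
      nsmul_eq_mul, mul_one]
  have hPeq : P = ((N : ℝ) * (1 + b * ((K : ℝ) - 1)) / (σ ^ 2 * (1 + b * K))) •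
      (1 : Matrix (Fin K) (Fin K) ℝ) := by
    ext j j'
    rw [hP, hproj]
    by_cases h : j = j'
    · subst h
      simp only [if_pos rfl, hself, Matrix.smul_apply, Matrix.one_apply_eq, smul_eq_mul, mul_one]
      rw [hQ, hσsq, hτ, hcval]
      field_simp
      rw [if_pos trivial]
      linear_combination (1 + b * K - b) * mul_inv_cancel₀ hσ2
    · simp only [if_neg h, horth j j' h, mul_zero, Matrix.smul_apply,
        Matrix.one_apply_ne h, smul_eq_mul, mul_zero]
  refine ⟨hPeq, ?_⟩
  rw [hPeq, Matrix.det_smul, Matrix.det_one, mul_one, Fintype.card_fin]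
  congr 1
  field_simp
end

section
/- Under the best-case covariate-balanced design (σ_1 = … = σ_K = σ > 0, τ² = bσ² with b > 0, allocations x_j ∈ {−1,1}^N with Zᵀ x_j = 0 for all j and x_jᵀ x_{j'} = 0 for j ≠ j'), the precision matrix P(β̂) is invertible and its inverse (the covariance matrix of the treatment effect estimates) equals (σ²(1+bK)/(N(1+b(K−1)))) · I_K; in particular each individual treatment effect variance equals (σ²/N)·(1+bK)/(1+b(K−1)) = (σ²/N)·(1 + b/(1+b(K−1))). -/
open Matrix Finset

/-- Under the best-case covariate-balanced design, the precision matrix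
`P(β̂)` is invertible with inverse (the covariance matrix of the treatment effect
estimates) `(σ²(1+bK)/(N(1+b(K−1)))) I_K`; in particular each individual treatment effect
variance equals `(σ²/N)(1+bK)/(1+b(K−1)) = (σ²/N)(1 + b/(1+b(K−1)))`. -/
theorem statement_8 (N K p : ℕ) (hN : 1 ≤ N) (hK : 1 ≤ K)
    (σ b : ℝ) (hσ : 0 < σ) (hb : 0 < b)
    (τsq : ℝ) (hτ : τsq = b * σ ^ 2)
    (σsq : Fin K → ℝ) (hσsq : ∀ j, σsq j = σ ^ 2)
    (Z : Matrix (Fin N) (Fin p) ℝ) (hZ : IsUnit (Zᵀ * Z).det)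
    (x : Fin K → Fin N → ℝ) (hx : ∀ j i, x j i = 1 ∨ x j i = -1)
    (hbal : ∀ j, Zᵀ *ᵥ x j = 0)
    (horth : ∀ j j' : Fin K, j ≠ j' → x j ⬝ᵥ x j' = 0)
    (c : ℝ) (hc : c = 1 + τsq * ∑ ℓ, (σsq ℓ)⁻¹)
    (Q : Fin K → ℝ) (hQ : ∀ j, Q j = (σsq j)⁻¹ * (c - τsq * (σsq j)⁻¹))
    (R : Fin K → Fin K → ℝ) (hR : ∀ j j', R j j' = -(τsq * (σsq j)⁻¹ * (σsq j')⁻¹))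
    (P : Matrix (Fin K) (Fin K) ℝ)
    (hP : ∀ j j', P j j' = (1 / c) * (if j = j' then Q j else R j j') *
      (x j ⬝ᵥ ((1 - Z * (Zᵀ * Z)⁻¹ * Zᵀ) *ᵥ x j'))) :
    IsUnit P.det ∧
    P⁻¹ = (σ ^ 2 * (1 + b * K) / ((N : ℝ) * (1 + b * ((K : ℝ) - 1)))) •
      (1 : Matrix (Fin K) (Fin K) ℝ) ∧
    (∀ j : Fin K,
      P⁻¹ j j = (σ ^ 2 / (N : ℝ)) * ((1 + b * K) / (1 + b * ((K : ℝ) - 1))) ∧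
      P⁻¹ j j = (σ ^ 2 / (N : ℝ)) * (1 + b / (1 + b * ((K : ℝ) - 1)))) := by
  have hK1 : (1:ℝ) ≤ (K:ℝ) := by exact_mod_cast hK
  have hden : (0:ℝ) < 1 + b * ((K:ℝ) - 1) := by nlinarith
  have hKb : (0:ℝ) < 1 + b * (K:ℝ) := by positivity
  have hN0 : (0:ℝ) < (N:ℝ) := by exact_mod_cast hN
  have hσ2 : (σ:ℝ) ^ 2 ≠ 0 := by positivity
  -- value of c
  have hcval : c = 1 + b * (K:ℝ) := by
    rw [hc, hτ]
    simp only [hσsq]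
    rw [Finset.sum_const, Finset.card_univ, Fintype.card_fin]
    field_simp [hσ.ne']
    ring_nf
    rw [mul_assoc b, ← mul_pow, mul_inv_cancel₀ hσ.ne', one_pow, mul_one]
  have hc0 : c ≠ 0 := by rw [hcval]; positivity
  -- projection fixes x j'
  have hproj : ∀ j', ((1 - Z * (Zᵀ * Z)⁻¹ * Zᵀ) *ᵥ x j') = x j' := by
    intro j'
    rw [Matrix.sub_mulVec, Matrix.one_mulVec, Matrix.mul_assoc, ← Matrix.mulVec_mulVec,
      ← Matrix.mulVec_mulVec, hbal, Matrix.mulVec_zero, Matrix.mulVec_zero, sub_zero]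
  -- self dot product
  have hdot : ∀ j, x j ⬝ᵥ x j = (N:ℝ) := by
    intro j
    have : ∀ i, x j i * x j i = 1 := by
      intro i; rcases hx j i with h | h <;> rw [h] <;> norm_num
    simp [dotProduct, this]
  set d : ℝ := (N : ℝ) * (1 + b * ((K:ℝ) - 1)) / (σ ^ 2 * (1 + b * (K:ℝ))) with hd
  have hd0 : d ≠ 0 := by
    have : 0 < d := by rw [hd]; positivity
    exact ne_of_gt this
  have hPd : P = d • (1 : Matrix (Fin K) (Fin K) ℝ) := by
    ext j j'
    rw [hP, hproj]
    by_cases h : j = j'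
    · subst h
      rw [hdot j, hQ, hσsq, hτ, hcval]
      simp only [if_pos rfl, if_true, Matrix.smul_apply, Matrix.one_apply_eq, smul_eq_mul, mul_one, hd]
      field_simp [hσ.ne']
      ring
    · rw [horth j j' h]
      simp [Matrix.one_apply, h]
  have hinv : P⁻¹ = d⁻¹ • (1 : Matrix (Fin K) (Fin K) ℝ) := by
    apply inv_eq_right_inv
    rw [hPd, smul_mul_assoc, mul_smul_comm, one_mul, smul_smul, mul_inv_cancel₀ hd0, one_smul]
  have hdinv : d⁻¹ = σ ^ 2 * (1 + b * (K:ℝ)) / ((N : ℝ) * (1 + b * ((K:ℝ) - 1))) := by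
    rw [hd, inv_div]
  constructor
  · rw [hPd]
    simp only [Matrix.det_smul, Matrix.det_one, mul_one, Fintype.card_fin]
    exact (isUnit_iff_ne_zero).2 (pow_ne_zero K hd0)
  constructor
  · rw [hinv, hdinv]
  · intro j
    have hentry : P⁻¹ j j = d⁻¹ := by
      rw [hinv]; simp [Matrix.one_apply]
    constructor
    · rw [hentry, hdinv]; field_simp
    · rw [hentry, hdinv]; field_simp; ring
end

section
/- Let N ≥ 1 and K ≥ 1 be natural numbers, b > 0 a real number, and x_1, …, x_K ∈ {−1,1}^N. Then det( I_N − (b/((1+bK)N)) Σ_{j=1}^K x_j x_jᵀ ) ≥ 1/(1+bK). -/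
open Matrix Finset

/-- Weierstrass product inequality. -/
lemma weier_aux {ι : Type*} (s : Finset ι) (f : ι → ℝ) (h0 : ∀ i ∈ s, 0 ≤ f i)
    (h1 : ∀ i ∈ s, f i ≤ 1) : 1 - ∑ i ∈ s, f i ≤ ∏ i ∈ s, (1 - f i) := by
  induction s using Finset.cons_induction with
  | empty => simp
  | cons a s ha ih =>
    rw [Finset.sum_cons, Finset.prod_cons]
    have hS : 0 ≤ ∑ i ∈ s, f i := Finset.sum_nonneg fun i hi => h0 i (Finset.mem_cons_of_mem hi)
    have hih := ih (fun i hi => h0 i (Finset.mem_cons_of_mem hi))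
      (fun i hi => h1 i (Finset.mem_cons_of_mem hi))
    have hfa0 : 0 ≤ f a := h0 a (Finset.mem_cons_self a s)
    have hfa1 : f a ≤ 1 := h1 a (Finset.mem_cons_self a s)
    nlinarith [mul_le_mul_of_nonneg_left hih (sub_nonneg.mpr hfa1)]

lemma psd_aux (N K : ℕ) (x : Fin K → Fin N → ℝ) :
    (∑ j : Fin K, vecMulVec (x j) (x j)).PosSemidef := by
  have h : ∀ j : Fin K, (vecMulVec (x j) (x j)).PosSemidef := by
    intro j
    rw [vecMulVec_eq Unit,
      show replicateCol Unit (x j) = (replicateRow Unit (x j))ᴴ from by ext i k; simp]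
    exact posSemidef_conjTranspose_mul_self _
  classical
  induction (Finset.univ : Finset (Fin K)) using Finset.cons_induction with
  | empty => simpa using Matrix.PosSemidef.zero
  | cons a s ha ih => rw [Finset.sum_cons]; exact (h a).add ih

/-- Ostrowski-type lower bound. For allocations `x_1,…,x_K ∈ {−1,1}^N` and
`b > 0`, `det(I_N − (b/((1+bK)N)) Σ_j x_j x_jᵀ) ≥ 1/(1+bK)`. -/
theorem statement_15 (N K : ℕ) (hN : 1 ≤ N) (hK : 1 ≤ K)
    (b : ℝ) (hb : 0 < b)
    (x : Fin K → Fin N → ℝ) (hx : ∀ j i, x j i = 1 ∨ x j i = -1) :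
    ((1 : Matrix (Fin N) (Fin N) ℝ) -
      (b / ((1 + b * K) * N)) • ∑ j : Fin K, vecMulVec (x j) (x j)).det ≥
      1 / (1 + b * K) := by
  classical
  set M : Matrix (Fin N) (Fin N) ℝ := ∑ j : Fin K, vecMulVec (x j) (x j) with hMdef
  have hNpos : (0 : ℝ) < N := by exact_mod_cast hN
  have hKpos : (0 : ℝ) < K := by exact_mod_cast hK
  have hden : (0 : ℝ) < 1 + b * K := by positivity
  set c : ℝ := b / ((1 + b * K) * N) with hcdef
  have hc : 0 < c := by positivity
  have hpsd : M.PosSemidef := psd_aux N K x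
  have hM : M.IsHermitian := hpsd.isHermitian
  set U : Matrix (Fin N) (Fin N) ℝ := (hM.eigenvectorUnitary : Matrix (Fin N) (Fin N) ℝ) with hU
  set lam : Fin N → ℝ := hM.eigenvalues with hlam
  have hUU : U * star U = 1 := (Matrix.mem_unitaryGroup_iff).mp hM.eigenvectorUnitary.2
  have hspec : M = U * diagonal lam * star U := by
    have := hM.spectral_theorem
    simpa [hU, hlam, Function.comp] using this
  -- trace of M equals sum of eigenvalues
  have htr1 : M.trace = ∑ i, lam i := by
    rw [hspec, Matrix.trace_mul_cycle]
    rw [show star U * U = 1 from (Matrix.mem_unitaryGroup_iff').mp hM.eigenvectorUnitary.2]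
    simp [Matrix.trace_diagonal]
  -- trace of M equals K * N
  have htr2 : M.trace = (K : ℝ) * N := by
    rw [hMdef, Matrix.trace_sum]
    have : ∀ j : Fin K, (vecMulVec (x j) (x j)).trace = (N : ℝ) := by
      intro j
      rw [Matrix.trace]
      have : ∀ i : Fin N, (vecMulVec (x j) (x j)).diag i = 1 := by
        intro i
        rcases hx j i with h | h <;> simp [Matrix.diag, vecMulVec_apply, h]
      rw [Finset.sum_congr rfl fun i _ => this i]
      simp
    rw [Finset.sum_congr rfl fun j _ => this j]
    simp [mul_comm]
  have hsum : ∑ i, lam i = (K : ℝ) * N := htr1 ▸ htr2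
  have hlamnn : ∀ i, 0 ≤ lam i := hpsd.eigenvalues_nonneg
  -- sum of c * lam i equals bK/(1+bK)
  have hcsum : ∑ i, c * lam i = b * K / (1 + b * K) := by
    rw [← Finset.mul_sum, hsum, hcdef]
    field_simp
  have hcsum_le : ∑ i, c * lam i ≤ 1 := by
    rw [hcsum]
    rw [div_le_one hden]
    linarith
  -- the matrix 1 - c • M diagonalized
  have hkey : (1 : Matrix (Fin N) (Fin N) ℝ) - c • M
      = U * diagonal (fun i => 1 - c * lam i) * star U := by
    have hd : diagonal (fun i => 1 - c * lam i)
        = (1 : Matrix (Fin N) (Fin N) ℝ) - c • diagonal lam := by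
      rw [← Matrix.diagonal_one, ← Matrix.diagonal_smul, ← Matrix.diagonal_sub]
      rfl
    rw [hd, Matrix.mul_sub, Matrix.sub_mul, Matrix.mul_smul, Matrix.smul_mul, Matrix.mul_one,
      hUU, ← hspec]
  rw [hkey]
  have hdet : (U * diagonal (fun i => 1 - c * lam i) * star U).det
      = ∏ i, (1 - c * lam i) := by
    rw [Matrix.det_mul, Matrix.det_mul, mul_comm, ← mul_assoc, ← Matrix.det_mul,
      show star U * U = 1 from (Matrix.mem_unitaryGroup_iff').mp hM.eigenvectorUnitary.2]
    simp
  rw [hdet, ge_iff_le]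
  have hweier : 1 - ∑ i, c * lam i ≤ ∏ i, (1 - c * lam i) := by
    apply weier_aux
    · intro i _
      exact mul_nonneg hc.le (hlamnn i)
    · intro i _
      calc c * lam i ≤ ∑ i, c * lam i := by
            apply Finset.single_le_sum (f := fun i => c * lam i)
              (fun i _ => mul_nonneg hc.le (hlamnn i)) (Finset.mem_univ i)
        _ ≤ 1 := hcsum_le
  refine le_trans ?_ hweier
  rw [hcsum]
  rw [div_le_iff₀ hden, sub_mul, div_mul_cancel₀ _ hden.ne']
  ring_nf
  linarith
end

section
/- Suppose σ_1 = … = σ_K = σ > 0 and τ² = bσ² with b > 0, and the allocations x_1, …, x_K ∈ {−1,1}^N are covariate balancing, i.e. Zᵀ x_j = 0 for every j. Then the determinant of the precision matrix factorizes as det(P(β̂)) = (N/σ²)^K · det( I_N − (b/((1+bK)N)) Σ_{j=1}^K x_j x_jᵀ ). -/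
open Matrix Finset

/-- If `σ_j² = σ²` for all `j`, `τ² = bσ²` with `b > 0`, and the allocations
`x_1,…,x_K ∈ {−1,1}^N` are covariate balancing (`Zᵀ x_j = 0`), then the determinant of the
precision matrix factorizes as
`det P(β̂) = (N/σ²)^K · det(I_N − (b/((1+bK)N)) Σ_j x_j x_jᵀ)`. -/
theorem statement_17 (N K p : ℕ) (hN : 1 ≤ N) (hK : 1 ≤ K)
    (σ b : ℝ) (hσ : 0 < σ) (hb : 0 < b)
    (τsq : ℝ) (hτ : τsq = b * σ ^ 2)
    (σsq : Fin K → ℝ) (hσsq : ∀ j, σsq j = σ ^ 2)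
    (Z : Matrix (Fin N) (Fin p) ℝ) (hZ : IsUnit (Zᵀ * Z).det)
    (x : Fin K → Fin N → ℝ) (hx : ∀ j i, x j i = 1 ∨ x j i = -1)
    (hbal : ∀ j, Zᵀ *ᵥ x j = 0)
    (c : ℝ) (hc : c = 1 + τsq * ∑ ℓ, (σsq ℓ)⁻¹)
    (Q : Fin K → ℝ) (hQ : ∀ j, Q j = (σsq j)⁻¹ * (c - τsq * (σsq j)⁻¹))
    (R : Fin K → Fin K → ℝ) (hR : ∀ j j', R j j' = -(τsq * (σsq j)⁻¹ * (σsq j')⁻¹))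
    (P : Matrix (Fin K) (Fin K) ℝ)
    (hP : ∀ j j', P j j' = (1 / c) * (if j = j' then Q j else R j j') *
      (x j ⬝ᵥ ((1 - Z * (Zᵀ * Z)⁻¹ * Zᵀ) *ᵥ x j'))) :
    P.det = ((N : ℝ) / σ ^ 2) ^ K *
      ((1 : Matrix (Fin N) (Fin N) ℝ) -
        (b / ((1 + b * K) * N)) • ∑ j : Fin K, vecMulVec (x j) (x j)).det := by
  have hσ2 : (σ : ℝ) ^ 2 ≠ 0 := pow_ne_zero _ hσ.ne'
  have hNpos : (0 : ℝ) < N := by exact_mod_cast hN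
  have hNne : (N : ℝ) ≠ 0 := hNpos.ne'
  have hcval : c = 1 + b * K := by
    rw [hc, hτ]
    have hsum : ∑ ℓ : Fin K, (σsq ℓ)⁻¹ = (K : ℝ) * (σ ^ 2)⁻¹ := by
      simp [hσsq, Finset.sum_const, mul_comm]
    rw [hsum]; field_simp
  have hcpos : (0 : ℝ) < c := by
    rw [hcval]; positivity
  have hcne : c ≠ 0 := hcpos.ne'
  have hcN : (1 + b * K) * (N : ℝ) ≠ 0 := by
    rw [← hcval]; exact mul_ne_zero hcne hNne
  -- projection acts trivially on balanced allocations
  have hproj : ∀ j, (1 - Z * (Zᵀ * Z)⁻¹ * Zᵀ) *ᵥ x j = x j := by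
    intro j
    have h1 : (Z * (Zᵀ * Z)⁻¹ * Zᵀ) *ᵥ x j = 0 := by
      rw [Matrix.mul_assoc, ← Matrix.mulVec_mulVec, ← Matrix.mulVec_mulVec, hbal j,
        Matrix.mulVec_zero, Matrix.mulVec_zero]
    rw [Matrix.sub_mulVec, h1, Matrix.one_mulVec, sub_zero]
  have hdot : ∀ j, x j ⬝ᵥ x j = (N : ℝ) := by
    intro j
    have h1 : ∀ i, x j i * x j i = 1 := by
      intro i; rcases hx j i with h | h <;> rw [h] <;> norm_num
    simp [dotProduct, h1]
  set X : Matrix (Fin N) (Fin K) ℝ := Matrix.of fun i j => x j i with hX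
  set a : ℝ := b / ((1 + b * K) * N) with ha
  -- key identity
  have hPeq : P = ((N : ℝ) / σ ^ 2) • ((1 : Matrix (Fin K) (Fin K) ℝ) - a • (Xᵀ * X)) := by
    ext j j'
    have hg : (Xᵀ * X) j j' = x j ⬝ᵥ x j' := by
      simp [Matrix.mul_apply, dotProduct, hX]
    rw [hP, hproj]
    by_cases h : j = j'
    · subst h
      simp only [eq_self_iff_true, if_true, if_pos rfl, Matrix.smul_apply, Matrix.sub_apply, Matrix.one_apply_eq,
        Matrix.smul_apply, hg, hdot, hQ, hσsq, hτ, hcval, ha, smul_eq_mul]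
      field_simp
    · simp only [if_neg h, Matrix.smul_apply, Matrix.sub_apply, Matrix.one_apply_ne h,
        Matrix.smul_apply, hg, hR, hσsq, hτ, hcval, ha, smul_eq_mul]
      field_simp
      ring
  -- sum of outer products is X Xᵀ
  have hsumOuter : ∑ j : Fin K, vecMulVec (x j) (x j) = X * Xᵀ := by
    ext i i'
    simp [Matrix.mul_apply, vecMulVec_apply, hX, Matrix.sum_apply, mul_comm]
  rw [hPeq, Matrix.det_smul, hsumOuter, Fintype.card_fin]
  congr 1
  -- Weinstein–Aronszajn
  have h1 : (1 : Matrix (Fin K) (Fin K) ℝ) - a • (Xᵀ * X) = 1 + Xᵀ * ((-a) • X) := by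
    rw [Matrix.mul_smul, neg_smul, ← sub_eq_add_neg]
  have h2 : (1 : Matrix (Fin N) (Fin N) ℝ) - a • (X * Xᵀ) = 1 + ((-a) • X) * Xᵀ := by
    rw [Matrix.smul_mul, neg_smul, ← sub_eq_add_neg]
  rw [h1, Matrix.det_one_add_mul_comm, ← h2]
end

section
/- If the precision matrix P(β̂) is positive semidefinite, then det(P(β̂)) ≤ Π_{j=1}^K (1/c) Q_j (x_jᵀ P_{Z⊥} x_j) ≤ (N/c)^K Π_{j=1}^K Q_j; in particular the D-efficiency det(P(β̂))^{1/K} is at most ((N/c)^K Π_{j=1}^K Q_j)^{1/K}, the Hadamard-based upper bound attained only under perfect covariate balancing within experiments and perfect orthogonality across experiments. -/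
open Matrix Finset
open scoped MatrixOrder

lemma psd_diag_nonneg {n : Type*} [Fintype n] [DecidableEq n]
    {A : Matrix n n ℝ} (hA : A.PosSemidef) (i : n) : 0 ≤ A i i := by
  simpa using hA.dotProduct_mulVec_nonneg (Pi.single i 1)

lemma psd_trace_eq_sum_eigenvalues {n : Type*} [Fintype n] [DecidableEq n]
    {A : Matrix n n ℝ} (hA : A.IsHermitian) :
    A.trace = ∑ i, hA.eigenvalues i := by
  conv_lhs => rw [hA.spectral_theorem, Unitary.conjStarAlgAut_apply]
  rw [Matrix.trace_mul_cycle, Unitary.coe_star_mul_self, Matrix.one_mul,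
    Matrix.trace_diagonal]
  simp

/-- Hadamard: determinant of a real PSD matrix is at most the product of diagonal entries. -/
lemma psd_det_le_prod_diag {n : Type*} [Fintype n] [DecidableEq n] [Nonempty n]
    {A : Matrix n n ℝ} (hA : A.PosSemidef) : A.det ≤ ∏ i, A i i := by
  by_cases h0 : ∃ i, A i i = 0
  · obtain ⟨i, hi⟩ := h0
    obtain ⟨S, hSsa, -, hSS⟩ := CFC.exists_sqrt_of_isSelfAdjoint_of_quasispectrumRestricts
      hA.isHermitian (QuasispectrumRestricts.nnreal_of_nonneg hA.nonneg)
    have hsym : ∀ a b, S a b = S b a := by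
      intro a b
      have : Sᴴ = S := hSsa
      have h2 := congrFun (congrFun this a) b
      simpa [Matrix.conjTranspose_apply] using h2.symm
    have hAi : ∑ k, S k i * S k i = 0 := by
      have : A i i = ∑ k, S i k * S k i := by
        conv_lhs => rw [← hSS]
        rfl
      rw [hi] at this
      rw [← this.symm] at *
      exact (Finset.sum_congr rfl (fun k _ => by rw [hsym k i])).trans this.symm
    have hcol : ∀ k, S k i = 0 := by
      intro k
      have := (Finset.sum_eq_zero_iff_of_nonneg
        (fun k _ => mul_self_nonneg (S k i))).mp hAi k (Finset.mem_univ k)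
      exact mul_self_eq_zero.mp this
    have hAcol : ∀ j, A j i = 0 := by
      intro j
      conv_lhs => rw [← hSS]
      rw [Matrix.mul_apply]
      exact Finset.sum_eq_zero fun k _ => by rw [hcol k, mul_zero]
    have hp : (∏ j, A j j) = 0 :=
      Finset.prod_eq_zero (Finset.mem_univ i) (show (fun j => A j j) i = 0 from hi)
    exact le_of_eq ((Matrix.det_eq_zero_of_column_eq_zero i hAcol).trans hp.symm)
  · push_neg at h0
    have hd : ∀ i, 0 < A i i := fun i => (psd_diag_nonneg hA i).lt_of_ne' (h0 i)
    set e : n → ℝ := fun i => (Real.sqrt (A i i))⁻¹ with he_def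
    have hs : ∀ i, Real.sqrt (A i i) ≠ 0 := fun i => (Real.sqrt_pos.2 (hd i)).ne'
    set E := Matrix.diagonal e with hE_def
    have hEH : Eᴴ = E := by
      rw [hE_def, Matrix.diagonal_conjTranspose]
      congr 1
    have hB : (E * A * E).PosSemidef := by
      have := hA.mul_mul_conjTranspose_same E
      rwa [hEH] at this
    set B := E * A * E with hB_def
    have hBdiag : ∀ i, B i i = 1 := by
      intro i
      rw [hB_def, Matrix.mul_diagonal, Matrix.diagonal_mul]
      have h1 : Real.sqrt (A i i) * Real.sqrt (A i i) = A i i := Real.mul_self_sqrt (hd i).le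
      simp only [he_def]
      rw [← h1]
      field_simp
      rw [Real.sqrt_sq (Real.sqrt_nonneg _)]; exact div_self (pow_ne_zero 2 (hs i))
    -- eigenvalues of B
    set μ := hB.1.eigenvalues with hμ
    have hμ0 : ∀ i, 0 ≤ μ i := hB.eigenvalues_nonneg
    have htr : ∑ i, μ i = (Fintype.card n : ℝ) := by
      rw [← psd_trace_eq_sum_eigenvalues hB.1, Matrix.trace]
      simp [Matrix.diag, hBdiag]
    have hcard : (0:ℝ) < (Fintype.card n : ℝ) := by
      exact_mod_cast Fintype.card_pos
    have hdetB : B.det = ∏ i, μ i := by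
      rw [hB.1.det_eq_prod_eigenvalues]; norm_num; rfl
    -- AM-GM
    have hamgm : ∏ i, μ i ≤ 1 := by
      have h := Real.geom_mean_le_arith_mean_weighted Finset.univ
        (fun _ => (Fintype.card n : ℝ)⁻¹) μ
        (fun i _ => by positivity)
        (by rw [Finset.sum_const, Finset.card_univ, nsmul_eq_mul]
            exact mul_inv_cancel₀ hcard.ne')
        (fun i _ => hμ0 i)
      have hsum : ∑ i, (Fintype.card n : ℝ)⁻¹ * μ i = 1 := by
        rw [← Finset.mul_sum, htr]
        field_simp
      rw [hsum] at h
      have hprod : ∏ i, μ i ^ (Fintype.card n : ℝ)⁻¹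
          = (∏ i, μ i) ^ (Fintype.card n : ℝ)⁻¹ := by
        rw [← Real.finset_prod_rpow Finset.univ μ (fun i _ => hμ0 i)]
      rw [hprod] at h
      have hP0 : 0 ≤ ∏ i, μ i := Finset.prod_nonneg fun i _ => hμ0 i
      have := Real.rpow_le_rpow (Real.rpow_nonneg hP0 _) h (le_of_lt hcard)
      rwa [← Real.rpow_mul hP0, inv_mul_cancel₀ hcard.ne', Real.rpow_one,
        Real.one_rpow] at this
    -- relate det A and det B
    have hdetE : E.det = ∏ i, e i := Matrix.det_diagonal
    have hdetB2 : B.det = E.det * A.det * E.det := by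
      rw [hB_def, Matrix.det_mul, Matrix.det_mul]
    have hEE : E.det * E.det * ∏ i, A i i = 1 := by
      rw [hdetE, ← Finset.prod_mul_distrib, ← Finset.prod_mul_distrib]
      apply Finset.prod_eq_one
      intro i _
      have h1 : Real.sqrt (A i i) * Real.sqrt (A i i) = A i i := Real.mul_self_sqrt (hd i).le
      simp only [he_def]
      rw [← h1]
      field_simp
      rw [Real.sqrt_sq (Real.sqrt_nonneg _)]; exact div_self (pow_ne_zero 2 (hs i))
    have key : A.det = B.det * ∏ i, A i i := by
      rw [hdetB2]
      linear_combination (-A.det) * hEE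
    rw [key]
    calc B.det * ∏ i, A i i ≤ 1 * ∏ i, A i i := by
          apply mul_le_mul_of_nonneg_right _ (Finset.prod_nonneg fun i _ => (hd i).le)
          rw [hdetB]; exact hamgm
      _ = ∏ i, A i i := one_mul _

/-- Hadamard-based upper bound. If the precision matrix `P(β̂)` is positive
semidefinite, then `det P(β̂) ≤ Π_j (1/c) Q_j (x_jᵀ P_{Z⊥} x_j) ≤ (N/c)^K Π_j Q_j`; in
particular the D-efficiency `det(P(β̂))^{1/K}` is at most `((N/c)^K Π_j Q_j)^{1/K}`. -/
theorem statement_18 (N K p : ℕ) (hN : 1 ≤ N) (hK : 1 ≤ K)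
    (τsq : ℝ) (hτ : 0 ≤ τsq) (σsq : Fin K → ℝ) (hσ : ∀ j, 0 < σsq j)
    (Z : Matrix (Fin N) (Fin p) ℝ) (hZ : IsUnit (Zᵀ * Z).det)
    (x : Fin K → Fin N → ℝ) (hx : ∀ j i, x j i = 1 ∨ x j i = -1)
    (c : ℝ) (hc : c = 1 + τsq * ∑ ℓ, (σsq ℓ)⁻¹)
    (Q : Fin K → ℝ) (hQ : ∀ j, Q j = (σsq j)⁻¹ * (c - τsq * (σsq j)⁻¹))
    (R : Fin K → Fin K → ℝ) (hR : ∀ j j', R j j' = -(τsq * (σsq j)⁻¹ * (σsq j')⁻¹))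
    (P : Matrix (Fin K) (Fin K) ℝ)
    (hP : ∀ j j', P j j' = (1 / c) * (if j = j' then Q j else R j j') *
      (x j ⬝ᵥ ((1 - Z * (Zᵀ * Z)⁻¹ * Zᵀ) *ᵥ x j')))
    (hPsd : P.PosSemidef) :
    P.det ≤ ∏ j : Fin K, (1 / c) * Q j *
        (x j ⬝ᵥ ((1 - Z * (Zᵀ * Z)⁻¹ * Zᵀ) *ᵥ x j)) ∧
    (∏ j : Fin K, (1 / c) * Q j *
        (x j ⬝ᵥ ((1 - Z * (Zᵀ * Z)⁻¹ * Zᵀ) *ᵥ x j))) ≤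
      ((N : ℝ) / c) ^ K * ∏ j : Fin K, Q j ∧
    P.det ^ ((1 : ℝ) / K) ≤
      (((N : ℝ) / c) ^ K * ∏ j : Fin K, Q j) ^ ((1 : ℝ) / K) := by
  haveI : Nonempty (Fin K) := ⟨⟨0, hK⟩⟩
  set M : Matrix (Fin N) (Fin N) ℝ := Z * (Zᵀ * Z)⁻¹ * Zᵀ with hM_def
  -- M is idempotent
  have hMM : M * M = M := by
    rw [hM_def]
    have h1 : (Zᵀ * Z) * ((Zᵀ * Z)⁻¹ * Zᵀ) = Zᵀ := by
      rw [← Matrix.mul_assoc, Matrix.mul_nonsing_inv _ hZ, Matrix.one_mul]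
    calc Z * (Zᵀ * Z)⁻¹ * Zᵀ * (Z * (Zᵀ * Z)⁻¹ * Zᵀ)
        = Z * (Zᵀ * Z)⁻¹ * ((Zᵀ * Z) * ((Zᵀ * Z)⁻¹ * Zᵀ)) := by
          simp only [Matrix.mul_assoc]
      _ = Z * (Zᵀ * Z)⁻¹ * Zᵀ := by rw [h1]
  -- M is symmetric
  have hMsym : Mᵀ = M := by
    rw [hM_def]
    rw [Matrix.transpose_mul, Matrix.transpose_mul, Matrix.transpose_transpose,
      Matrix.transpose_nonsing_inv, Matrix.transpose_mul, Matrix.transpose_transpose]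
    simp only [Matrix.mul_assoc]
  have hMH : Mᴴ = M := by
    have : Mᴴ = Mᵀ := by
      ext a b; simp [Matrix.conjTranspose_apply, Matrix.transpose_apply]
    rw [this, hMsym]
  set W : Matrix (Fin N) (Fin N) ℝ := 1 - M with hW_def
  have hWH : Wᴴ = W := by
    rw [hW_def, Matrix.conjTranspose_sub, Matrix.conjTranspose_one, hMH]
  have hWW : W * W = W := by
    rw [hW_def]
    simp only [Matrix.sub_mul, Matrix.mul_sub, Matrix.one_mul, Matrix.mul_one]
    rw [hMM]
    abel
  have hWpsd : W.PosSemidef := by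
    have := Matrix.posSemidef_conjTranspose_mul_self W
    rwa [hWH, hWW] at this
  have hMpsd : M.PosSemidef := by
    have := Matrix.posSemidef_conjTranspose_mul_self M
    rwa [hMH, hMM] at this
  have hstar : ∀ v : Fin N → ℝ, star v = v := fun v => funext fun i => star_trivial _
  have hquad0 : ∀ j, 0 ≤ x j ⬝ᵥ (W *ᵥ x j) := by
    intro j
    have := hWpsd.dotProduct_mulVec_nonneg (x j)
    rwa [hstar] at this
  have hquadN : ∀ j, x j ⬝ᵥ (W *ᵥ x j) ≤ (N : ℝ) := by
    intro j
    have h1 : x j ⬝ᵥ (W *ᵥ x j) = x j ⬝ᵥ x j - x j ⬝ᵥ (M *ᵥ x j) := by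
      rw [hW_def, Matrix.sub_mulVec, Matrix.one_mulVec, dotProduct_sub]
    have h2 : x j ⬝ᵥ x j = (N : ℝ) := by
      have hone : ∀ i, x j i * x j i = 1 := by
        intro i; rcases hx j i with h | h <;> rw [h] <;> norm_num
      simp [dotProduct, hone]
    have h3 : 0 ≤ x j ⬝ᵥ (M *ᵥ x j) := by
      have := hMpsd.dotProduct_mulVec_nonneg (x j)
      rwa [hstar] at this
    linarith
  have hc0 : 0 < c := by
    have : 0 ≤ τsq * ∑ ℓ, (σsq ℓ)⁻¹ :=
      mul_nonneg hτ (Finset.sum_nonneg fun ℓ _ => (inv_pos.2 (hσ ℓ)).le)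
    rw [hc]; linarith
  have hQ0 : ∀ j, 0 < Q j := by
    intro j
    have hle : (σsq j)⁻¹ ≤ ∑ ℓ, (σsq ℓ)⁻¹ :=
      Finset.single_le_sum (fun ℓ _ => (inv_pos.2 (hσ ℓ)).le) (Finset.mem_univ j)
    have h2 : τsq * (σsq j)⁻¹ ≤ τsq * ∑ ℓ, (σsq ℓ)⁻¹ :=
      mul_le_mul_of_nonneg_left hle hτ
    have hpos : 0 < c - τsq * (σsq j)⁻¹ := by rw [hc]; linarith
    rw [hQ]
    exact mul_pos (inv_pos.2 (hσ j)) hpos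
  have hPdiag : ∀ j, P j j = (1 / c) * Q j * (x j ⬝ᵥ (W *ᵥ x j)) := by
    intro j; rw [hP]; simp
  have part1 : P.det ≤ ∏ j : Fin K, (1 / c) * Q j * (x j ⬝ᵥ (W *ᵥ x j)) := by
    calc P.det ≤ ∏ j, P j j := psd_det_le_prod_diag hPsd
      _ = ∏ j : Fin K, (1 / c) * Q j * (x j ⬝ᵥ (W *ᵥ x j)) :=
          Finset.prod_congr rfl fun j _ => hPdiag j
  have part2 : (∏ j : Fin K, (1 / c) * Q j * (x j ⬝ᵥ (W *ᵥ x j))) ≤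
      ((N : ℝ) / c) ^ K * ∏ j : Fin K, Q j := by
    have hrhs : ((N : ℝ) / c) ^ K * ∏ j : Fin K, Q j
        = ∏ j : Fin K, ((N : ℝ) / c) * Q j := by
      rw [Finset.prod_mul_distrib, Finset.prod_const, Finset.card_univ, Fintype.card_fin]
    rw [hrhs]
    apply Finset.prod_le_prod
    · intro j _
      exact mul_nonneg (mul_nonneg (one_div_nonneg.mpr hc0.le) (hQ0 j).le) (hquad0 j)
    · intro j _
      calc (1 / c) * Q j * (x j ⬝ᵥ (W *ᵥ x j))
          ≤ (1 / c) * Q j * (N : ℝ) :=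
            mul_le_mul_of_nonneg_left (hquadN j) (mul_nonneg (one_div_nonneg.mpr hc0.le) (hQ0 j).le)
        _ = ((N : ℝ) / c) * Q j := by ring
  have hdet0 : 0 ≤ P.det := by
    rw [hPsd.1.det_eq_prod_eigenvalues]
    have : ∀ i, (0:ℝ) ≤ hPsd.1.eigenvalues i := hPsd.eigenvalues_nonneg
    exact Finset.prod_nonneg fun i _ => by simpa using this i
  exact ⟨part1, part2,
    Real.rpow_le_rpow hdet0 (part1.trans part2) (by positivity)⟩
end
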